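/- Symmetrization lemma: Let q ∈ [1,∞), E a real Banach space, and η_1,...,η_M be E-valued random variables in L^q with E[η_j] = 0 for all j. Let r_1,...,r_M be a Rademacher family such that η_1,...,η_M, r_1,...,r_M are all independent. Then ||Σ_{j=1}^M η_j||_{L^q(Ω;E)} ≤ 2 ||Σ_{j=1}^M r_j η_j||_{L^q(Ω;E)}. -/

import Mathlib

open MeasureTheory ProbabilityTheory

/-- A Rademacher family: independent random variables taking the values `1` and `-1`,
each with probability `1/2`. -/
def IsRademacherFamily {Ω : Type*} [MeasurableSpace Ω] (P : Measure Ω)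
    {ι : Type*} (r : ι → Ω → ℝ) : Prop :=
  (∀ j, Measurable (r j)) ∧
  iIndepFun r P ∧
  ∀ j, P {ω | r j ω = 1} = 1 / 2 ∧ P {ω | r j ω = -1} = 1 / 2

universe u

/-- Codomain family for the joint family `η₁, …, η_M, r₁, …, r_M`:
the first `M` variables are `E`-valued, the last `M` ones are real-valued. -/
def pairType (E : Type u) (M : ℕ) : Fin M ⊕ Fin M → Type u :=
  fun i => Sum.elim (fun _ => E) (fun _ => ULift ℝ) i

def pairMS {E : Type*} [MeasurableSpace E] (M : ℕ) :
    (i : Fin M ⊕ Fin M) → MeasurableSpace (pairType E M i)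
  | .inl _ => inferInstanceAs (MeasurableSpace E)
  | .inr _ => inferInstanceAs (MeasurableSpace (ULift ℝ))

def pairFun {Ω E : Type*} (M : ℕ) (η : Fin M → Ω → E) (r : Fin M → Ω → ℝ) :
    (i : Fin M ⊕ Fin M) → Ω → pairType E M i
  | .inl j => η j
  | .inr j => fun ω => ULift.up (r j ω)

open scoped ENNReal NNReal

lemma iIndepFun_congr_ae {Ω : Type*} [MeasurableSpace Ω] {P : Measure Ω} {ι : Type*}
    {β : ι → Type*} {m : ∀ i, MeasurableSpace (β i)} {f g : ∀ i, Ω → β i}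
    (h : iIndepFun (m := m) f P) (hfg : ∀ i, f i =ᵐ[P] g i) : iIndepFun (m := m) g P := by
  rw [iIndepFun_iff_measure_inter_preimage_eq_mul] at h ⊢
  intro S sets H
  have key : ∀ i, P (f i ⁻¹' sets i) = P (g i ⁻¹' sets i) := by
    intro i
    refine measure_congr ?_
    filter_upwards [hfg i] with ω hω
    show (ω ∈ f i ⁻¹' sets i) = (ω ∈ g i ⁻¹' sets i)
    simp only [Set.mem_preimage, hω]
  have hall : ∀ᵐ ω ∂P, ∀ i ∈ S, f i ω = g i ω :=
    (ae_ball_iff S.countable_toSet).2 fun i _ => hfg i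
  have h2 : P (⋂ i ∈ S, f i ⁻¹' sets i) = P (⋂ i ∈ S, g i ⁻¹' sets i) := by
    refine measure_congr ?_
    filter_upwards [hall] with ω hω
    show (ω ∈ ⋂ i ∈ S, f i ⁻¹' sets i) = (ω ∈ ⋂ i ∈ S, g i ⁻¹' sets i)
    simp only [Set.mem_iInter, Set.mem_preimage, eq_iff_iff]
    exact forall_congr' fun i => forall_congr' fun hi => by rw [hω i hi]
  rw [← h2, h S H]
  exact Finset.prod_congr rfl fun i _ => key i

lemma jensen_step {Ω : Type*} [MeasurableSpace Ω] (P : Measure Ω) [IsProbabilityMeasure P]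
    {E : Type*} [NormedAddCommGroup E] [NormedSpace ℝ E] [CompleteSpace E]
    [MeasurableSpace E] [BorelSpace E] [SecondCountableTopology E]
    {q : ℝ} (hq : 1 ≤ q) {X Y : Ω → E} (hX : Measurable X) (hY : Measurable Y)
    (hYint : Integrable Y P) (hY0 : ∫ ω, Y ω ∂P = 0) (hind : IndepFun X Y P) :
    ∫⁻ ω, (‖X ω‖₊ : ℝ≥0∞) ^ q ∂P ≤ ∫⁻ ω, (‖X ω - Y ω‖₊ : ℝ≥0∞) ^ q ∂P := by
  have hq0 : (0:ℝ) < q := lt_of_lt_of_le one_pos hq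
  have hp0 : ENNReal.ofReal q ≠ 0 := by
    simp [ENNReal.ofReal_eq_zero, not_le, hq0]
  have hptop : ENNReal.ofReal q ≠ ∞ := ENNReal.ofReal_ne_top
  have hpt : (ENNReal.ofReal q).toReal = q := ENNReal.toReal_ofReal hq0.le
  -- step 1 : pointwise bound
  have step1 : ∀ ω, (‖X ω‖₊ : ℝ≥0∞) ^ q ≤ ∫⁻ ω', (‖X ω - Y ω'‖₊ : ℝ≥0∞) ^ q ∂P := by
    intro ω
    have h1 : X ω = ∫ ω', (X ω - Y ω') ∂P := by
      rw [integral_sub (integrable_const _) hYint, hY0, sub_zero, integral_const]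
      simp
    have h2 : (‖X ω‖₊ : ℝ≥0∞) ≤ ∫⁻ ω', (‖X ω - Y ω'‖₊ : ℝ≥0∞) ∂P := by
      calc (‖X ω‖₊ : ℝ≥0∞) = ‖∫ ω', (X ω - Y ω') ∂P‖₊ := by rw [← h1]
      _ ≤ ∫⁻ ω', (‖X ω - Y ω'‖₊ : ℝ≥0∞) ∂P := enorm_integral_le_lintegral_enorm _
    have hsm : AEStronglyMeasurable (fun ω' => X ω - Y ω') P :=
      (aestronglyMeasurable_const.sub hY.aestronglyMeasurable)
    have h3 : (∫⁻ ω', (‖X ω - Y ω'‖₊ : ℝ≥0∞) ∂P)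
        ≤ (∫⁻ ω', (‖X ω - Y ω'‖₊ : ℝ≥0∞) ^ q ∂P) ^ (1/q) := by
      have := eLpNorm_le_eLpNorm_of_exponent_le (μ := P)
        (p := 1) (q := ENNReal.ofReal q) (by
          rw [← ENNReal.ofReal_one]; exact ENNReal.ofReal_le_ofReal hq) hsm
      rwa [eLpNorm_one_eq_lintegral_enorm,
        eLpNorm_eq_lintegral_rpow_enorm_toReal hp0 hptop, hpt] at this
    calc (‖X ω‖₊ : ℝ≥0∞) ^ q
        ≤ ((∫⁻ ω', (‖X ω - Y ω'‖₊ : ℝ≥0∞) ^ q ∂P) ^ (1/q)) ^ q :=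
          ENNReal.rpow_le_rpow (h2.trans h3) hq0.le
      _ = ∫⁻ ω', (‖X ω - Y ω'‖₊ : ℝ≥0∞) ^ q ∂P := by
          rw [← ENNReal.rpow_mul, one_div_mul_cancel hq0.ne', ENNReal.rpow_one]
  -- step 2
  have step2 : ∫⁻ ω, (‖X ω‖₊ : ℝ≥0∞) ^ q ∂P
      ≤ ∫⁻ ω, ∫⁻ ω', (‖X ω - Y ω'‖₊ : ℝ≥0∞) ^ q ∂P ∂P :=
    lintegral_mono fun ω => step1 ω
  -- step 3 : Fubini + independence
  have hf : Measurable fun z : E × E => (‖z.1 - z.2‖₊ : ℝ≥0∞) ^ q :=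
    ENNReal.continuous_rpow_const.measurable.comp
      ((measurable_fst.sub measurable_snd).enorm)
  have hmap : P.map (fun ω => (X ω, Y ω)) = (P.map X).prod (P.map Y) :=
    (indepFun_iff_map_prod_eq_prod_map_map hX.aemeasurable hY.aemeasurable).mp hind
  haveI : IsProbabilityMeasure (P.map X) := Measure.isProbabilityMeasure_map hX.aemeasurable
  haveI : IsProbabilityMeasure (P.map Y) := Measure.isProbabilityMeasure_map hY.aemeasurable
  have step3 : ∫⁻ ω, ∫⁻ ω', (‖X ω - Y ω'‖₊ : ℝ≥0∞) ^ q ∂P ∂P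
      = ∫⁻ ω, (‖X ω - Y ω‖₊ : ℝ≥0∞) ^ q ∂P := by
    calc ∫⁻ ω, ∫⁻ ω', (‖X ω - Y ω'‖₊ : ℝ≥0∞) ^ q ∂P ∂P
        = ∫⁻ ω, ∫⁻ y, (‖X ω - y‖₊ : ℝ≥0∞) ^ q ∂(P.map Y) ∂P := by
          refine lintegral_congr fun ω => ?_
          exact (lintegral_map (ENNReal.continuous_rpow_const.measurable.comp
            ((measurable_const.sub measurable_id).enorm)) hY).symm
      _ = ∫⁻ x, ∫⁻ y, (‖x - y‖₊ : ℝ≥0∞) ^ q ∂(P.map Y) ∂(P.map X) := by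
          rw [lintegral_map ?_ hX]
          exact Measurable.lintegral_prod_right (f := fun x y => (‖x - y‖₊ : ℝ≥0∞) ^ q) hf
      _ = ∫⁻ z, (‖z.1 - z.2‖₊ : ℝ≥0∞) ^ q ∂((P.map X).prod (P.map Y)) :=
          (lintegral_prod _ hf.aemeasurable).symm
      _ = ∫⁻ z, (‖z.1 - z.2‖₊ : ℝ≥0∞) ^ q ∂(P.map (fun ω => (X ω, Y ω))) := by
          rw [hmap]
      _ = ∫⁻ ω, (‖X ω - Y ω‖₊ : ℝ≥0∞) ^ q ∂P := lintegral_map hf (hX.prodMk hY)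
  exact step2.trans (le_of_eq step3)

section indep

attribute [local instance] pairMS

variable {Ω : Type*} [MeasurableSpace Ω] {P : Measure Ω}
  {E : Type*} [NormedAddCommGroup E] [MeasurableSpace E] [BorelSpace E]
  [SecondCountableTopology E]
  {M : ℕ} {η : Fin M → Ω → E} {r : Fin M → Ω → ℝ}

lemma pair_meas (hηm : ∀ j, Measurable (η j)) (hrm : ∀ j, Measurable (r j)) :
    ∀ i, @Measurable Ω (pairType E M i) _ (pairMS M i) (pairFun M η r i) := by
  rintro (j | j)
  · exact hηm j
  · exact measurable_up.comp (hrm j)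

lemma indep_eta_sums (hηm : ∀ j, Measurable (η j)) (hrm : ∀ j, Measurable (r j))
    (hindep : iIndepFun (m := pairMS M) (pairFun M η r) P)
    (A B : Finset (Fin M)) (hAB : Disjoint A B) :
    IndepFun (fun ω => ∑ j ∈ A, η j ω) (fun ω => ∑ j ∈ B, η j ω) P := by
  have hdisj : Disjoint (A.image Sum.inl) (B.image (Sum.inl : Fin M → Fin M ⊕ Fin M)) := by
    rw [Finset.disjoint_image Sum.inl_injective]
    exact hAB
  have h := hindep.indepFun_finset (A.image Sum.inl) (B.image Sum.inl) hdisj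
    (pair_meas hηm hrm)
  have h2 := h.comp
    (φ := fun x : (∀ i : (A.image Sum.inl : Finset (Fin M ⊕ Fin M)), pairType E M i) =>
      ∑ j ∈ A.attach, (x ⟨Sum.inl j.1, Finset.mem_image_of_mem _ j.2⟩ : E))
    (ψ := fun x : (∀ i : (B.image Sum.inl : Finset (Fin M ⊕ Fin M)), pairType E M i) =>
      ∑ j ∈ B.attach, (x ⟨Sum.inl j.1, Finset.mem_image_of_mem _ j.2⟩ : E))
    (Finset.measurable_sum _ fun j _ => measurable_pi_apply _)
    (Finset.measurable_sum _ fun j _ => measurable_pi_apply _)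
  have e1 : ((fun x : (∀ i : (A.image Sum.inl : Finset (Fin M ⊕ Fin M)), pairType E M i) =>
      ∑ j ∈ A.attach, (x ⟨Sum.inl j.1, Finset.mem_image_of_mem _ j.2⟩ : E)) ∘
      (fun a (i : (A.image Sum.inl : Finset (Fin M ⊕ Fin M))) => pairFun M η r i a))
      = fun ω => ∑ j ∈ A, η j ω := by
    funext ω
    exact Finset.sum_attach A fun a => η a ω
  have e2 : ((fun x : (∀ i : (B.image Sum.inl : Finset (Fin M ⊕ Fin M)), pairType E M i) =>
      ∑ j ∈ B.attach, (x ⟨Sum.inl j.1, Finset.mem_image_of_mem _ j.2⟩ : E)) ∘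
      (fun a (i : (B.image Sum.inl : Finset (Fin M ⊕ Fin M))) => pairFun M η r i a))
      = fun ω => ∑ j ∈ B, η j ω := by
    funext ω
    exact Finset.sum_attach B fun a => η a ω
  rwa [e1, e2] at h2

lemma indep_r_eta (hηm : ∀ j, Measurable (η j)) (hrm : ∀ j, Measurable (r j))
    (hindep : iIndepFun (m := pairMS M) (pairFun M η r) P) :
    IndepFun (fun ω (j : Fin M) => r j ω) (fun ω (j : Fin M) => η j ω) P := by
  have hdisj : Disjoint (Finset.univ.image (Sum.inr : Fin M → Fin M ⊕ Fin M))
      (Finset.univ.image (Sum.inl : Fin M → Fin M ⊕ Fin M)) := by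
    simp [Finset.disjoint_left]
  have h := hindep.indepFun_finset (Finset.univ.image Sum.inr) (Finset.univ.image Sum.inl)
    hdisj (pair_meas hηm hrm)
  have h2 := h.comp
    (φ := fun x : (∀ i : (Finset.univ.image (Sum.inr : Fin M → Fin M ⊕ Fin M) :
        Finset (Fin M ⊕ Fin M)), pairType E M i) =>
      fun j : Fin M => (x ⟨Sum.inr j, Finset.mem_image_of_mem _ (Finset.mem_univ j)⟩ :
        ULift ℝ).down)
    (ψ := fun x : (∀ i : (Finset.univ.image (Sum.inl : Fin M → Fin M ⊕ Fin M) :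
        Finset (Fin M ⊕ Fin M)), pairType E M i) =>
      fun j : Fin M => (x ⟨Sum.inl j, Finset.mem_image_of_mem _ (Finset.mem_univ j)⟩ : E))
    (measurable_pi_lambda _ fun j => measurable_down.comp (measurable_pi_apply _))
    (measurable_pi_lambda _ fun j => measurable_pi_apply _)
  exact h2

end indep

section Aux

attribute [local instance] pairMS

set_option maxHeartbeats 1000000

theorem symmetrization_aux
    {Ω : Type*} [MeasurableSpace Ω] (P : Measure Ω) [IsProbabilityMeasure P]
    {E : Type*} [NormedAddCommGroup E] [NormedSpace ℝ E] [CompleteSpace E]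
    [MeasurableSpace E] [BorelSpace E] [SecondCountableTopology E]
    (q : ℝ) (hq : 1 ≤ q) (M : ℕ)
    (η : Fin M → Ω → E) (r : Fin M → Ω → ℝ)
    (hηm : ∀ j, Measurable (η j))
    (hmem : ∀ j, MemLp (η j) (ENNReal.ofReal q) P)
    (hmean : ∀ j, ∫ ω, η j ω ∂P = 0)
    (hrad : IsRademacherFamily P r)
    (hindep : iIndepFun (m := pairMS M) (pairFun M η r) P) :
    eLpNorm (fun ω => ∑ j, η j ω) (ENNReal.ofReal q) P
      ≤ 2 * eLpNorm (fun ω => ∑ j, r j ω • η j ω) (ENNReal.ofReal q) P := by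
  classical
  obtain ⟨hrm, hriid, hrval⟩ := hrad
  have hq0 : (0:ℝ) < q := lt_of_lt_of_le one_pos hq
  set p := ENNReal.ofReal q with hp
  have hp0 : p ≠ 0 := by simp [hp, ENNReal.ofReal_eq_zero, not_le, hq0]
  have hptop : p ≠ ∞ := ENNReal.ofReal_ne_top
  have hp1 : 1 ≤ p := by rw [hp, ← ENNReal.ofReal_one]; exact ENNReal.ofReal_le_ofReal hq
  have hpt : p.toReal = q := ENNReal.toReal_ofReal hq0.le
  set sign : Bool → ℝ := fun b => if b then 1 else (-1) with hsign
  set S : (Fin M → Bool) → Ω → E := fun ε ω => ∑ j, sign (ε j) • η j ω with hS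
  set J : (Ω → E) → ℝ≥0∞ := fun f => ∫⁻ ω, (‖f ω‖₊ : ℝ≥0∞) ^ q ∂P with hJdef
  have hJ_eq : ∀ f : Ω → E, eLpNorm f p P = (J f) ^ (1/q) := by
    intro f
    rw [eLpNorm_eq_lintegral_rpow_enorm_toReal hp0 hptop, hpt]
    rfl
  have hsign_inj : ∀ b b' : Bool, sign b = sign b' → b = b' := by
    intro b b'
    cases b <;> cases b' <;> simp [hsign] <;> norm_num
  have hSm : ∀ ε, Measurable (S ε) :=
    fun ε => Finset.measurable_sum _ fun j _ => (hηm j).const_smul _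
  have hint : ∀ j, Integrable (η j) P := fun j => (hmem j).integrable hp1
  -- Step A : per-sign-vector bound
  have key : ∀ ε, eLpNorm (fun ω => ∑ j, η j ω) p P ≤ 2 * (J (S ε)) ^ (1/q) := by
    intro ε
    set A := Finset.univ.filter (fun j => ε j = true) with hA
    set X := fun ω => ∑ j ∈ A, η j ω with hX
    set Y := fun ω => ∑ j ∈ Aᶜ, η j ω with hY
    have hXm : Measurable X := Finset.measurable_sum _ fun j _ => hηm j
    have hYm : Measurable Y := Finset.measurable_sum _ fun j _ => hηm j
    have hXint : Integrable X P := integrable_finset_sum _ fun j _ => hint j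
    have hYint : Integrable Y P := integrable_finset_sum _ fun j _ => hint j
    have hX0 : ∫ ω, X ω ∂P = 0 := by
      rw [hX, integral_finset_sum _ fun j _ => hint j]
      simp [hmean]
    have hY0 : ∫ ω, Y ω ∂P = 0 := by
      rw [hY, integral_finset_sum _ fun j _ => hint j]
      simp [hmean]
    have hindXY : IndepFun X Y P :=
      indep_eta_sums hηm hrm hindep A Aᶜ disjoint_compl_right
    have hSXY : ∀ ω, S ε ω = X ω - Y ω := by
      intro ω
      rw [hS, hX, hY]
      simp only
      rw [← Finset.sum_add_sum_compl A fun j => sign (ε j) • η j ω, sub_eq_add_neg,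
        ← Finset.sum_neg_distrib]
      congr 1
      · refine Finset.sum_congr rfl fun j hj => ?_
        rw [hA, Finset.mem_filter] at hj
        rw [hj.2]
        simp [hsign]
      · refine Finset.sum_congr rfl fun j hj => ?_
        rw [Finset.mem_compl, hA, Finset.mem_filter] at hj
        have : ε j = false := by
          rcases Bool.eq_false_or_eq_true (ε j) with h | h
          · exact absurd ⟨Finset.mem_univ j, h⟩ hj
          · exact h
        rw [this]
        simp [hsign]
    have hJX : J X ≤ J (S ε) := by
      have h := jensen_step P hq hXm hYm hYint hY0 hindXY
      refine h.trans (le_of_eq ?_)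
      exact lintegral_congr fun ω => by rw [← hSXY ω]
    have hJY : J Y ≤ J (S ε) := by
      have h := jensen_step P hq hYm hXm hXint hX0 hindXY.symm
      refine h.trans (le_of_eq ?_)
      refine lintegral_congr fun ω => ?_
      rw [← neg_sub (X ω) (Y ω), nnnorm_neg, ← hSXY ω]
    have hsum : (fun ω => ∑ j, η j ω) = fun ω => X ω + Y ω := by
      funext ω
      rw [hX, hY]
      exact (Finset.sum_add_sum_compl A _).symm
    calc eLpNorm (fun ω => ∑ j, η j ω) p P = eLpNorm (fun ω => X ω + Y ω) p P := by rw [hsum]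
      _ ≤ eLpNorm X p P + eLpNorm Y p P :=
          eLpNorm_add_le hXm.aestronglyMeasurable hYm.aestronglyMeasurable hp1
      _ ≤ (J (S ε)) ^ (1/q) + (J (S ε)) ^ (1/q) := by
          refine add_le_add ?_ ?_
          · rw [hJ_eq X]; exact ENNReal.rpow_le_rpow hJX (by positivity)
          · rw [hJ_eq Y]; exact ENNReal.rpow_le_rpow hJY (by positivity)
      _ = 2 * (J (S ε)) ^ (1/q) := (two_mul _).symm
  -- Step C : partition by the sign pattern of r
  set T : (Fin M → Bool) → Set Ω := fun ε => {ω | ∀ j, r j ω = sign (ε j)} with hT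
  have hTmeas : ∀ ε, MeasurableSet (T ε) := by
    intro ε
    have hTe : T ε = ⋂ j, (r j) ⁻¹' {sign (ε j)} := by
      ext ω; simp [hT, Set.mem_iInter]
    rw [hTe]
    exact MeasurableSet.iInter fun j => hrm j (measurableSet_singleton _)
  have hae : ∀ᵐ ω ∂P, ∀ j, r j ω = 1 ∨ r j ω = -1 := by
    rw [ae_all_iff]
    intro j
    have hm1 : MeasurableSet {ω | r j ω = 1} := hrm j (measurableSet_singleton 1)
    have hm2 : MeasurableSet {ω | r j ω = -1} := hrm j (measurableSet_singleton (-1))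
    have hdis : Disjoint {ω | r j ω = 1} {ω | r j ω = -1} := by
      rw [Set.disjoint_left]
      intro ω h1 h2
      simp only [Set.mem_setOf_eq] at h1 h2
      rw [h1] at h2
      norm_num at h2
    have hu : P ({ω | r j ω = 1} ∪ {ω | r j ω = -1}) = 1 := by
      rw [measure_union hdis hm2, (hrval j).1, (hrval j).2]
      exact ENNReal.add_halves 1
    have hc : P ({ω | r j ω = 1} ∪ {ω | r j ω = -1})ᶜ = 0 := by
      rw [measure_compl (hm1.union hm2) (measure_ne_top _ _), hu, measure_univ, tsub_self]
    have hset : {a | ¬(r j a = 1 ∨ r j a = -1)} = ({ω | r j ω = 1} ∪ {ω | r j ω = -1})ᶜ := by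
      ext ω; simp [not_or]
    rw [ae_iff, hset]
    exact hc
  have hdec : ∀ x : ℝ, (x = 1 ∨ x = -1) → x = sign (decide (x = 1)) := by
    intro x hx
    rcases hx with h | h
    · simp [h, hsign]
    · have hne : ¬ (x = 1) := by rw [h]; norm_num
      have hd : decide (x = 1) = false := decide_eq_false hne
      rw [hd, h]
      simp [hsign]
  have hmemT : ∀ ω, (∀ j, r j ω = 1 ∨ r j ω = -1) →
      ω ∈ T (fun j => decide (r j ω = 1)) := by
    intro ω hω
    rw [hT]
    exact fun j => hdec _ (hω j)
  have hTval : ∀ ω ε, ω ∈ T ε → ∀ j, r j ω = sign (ε j) := by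
    intro ω ε h
    rw [hT] at h
    exact h
  have huniq : ∀ ω ε ε', ω ∈ T ε → ω ∈ T ε' → ε = ε' := by
    intro ω ε ε' h1 h2
    funext j
    exact hsign_inj _ _ (by rw [← hTval ω ε h1 j, ← hTval ω ε' h2 j])
  have hFsum : (fun ω => (‖∑ j, r j ω • η j ω‖₊ : ℝ≥0∞) ^ q)
      =ᵐ[P] (fun ω => ∑ ε : Fin M → Bool,
        (T ε).indicator (fun ω' => (‖S ε ω'‖₊ : ℝ≥0∞) ^ q) ω) := by
    filter_upwards [hae] with ω hω
    have hmem0 := hmemT ω hω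
    rw [Finset.sum_eq_single_of_mem _ (Finset.mem_univ (fun j => decide (r j ω = 1)))
      (fun ε _ hne => ?_)]
    · rw [Set.indicator_of_mem hmem0]
      have hrw : ∑ j, r j ω • η j ω = S (fun j => decide (r j ω = 1)) ω := by
        rw [hS]
        exact Finset.sum_congr rfl fun j _ => by
          rw [← hTval ω _ hmem0 j]
      rw [hrw]
    · rw [Set.indicator_of_notMem]
      intro hmemε
      exact hne (huniq ω ε _ hmemε hmem0)
  have hεint : ∀ ε, ∫⁻ ω, (T ε).indicator (fun ω' => (‖S ε ω'‖₊ : ℝ≥0∞) ^ q) ω ∂P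
      = P (T ε) * J (S ε) := by
    intro ε
    have hv : Measurable (fun ω => (‖S ε ω‖₊ : ℝ≥0∞) ^ q) :=
      ENNReal.continuous_rpow_const.measurable.comp (hSm ε).enorm
    have hu : Measurable (fun ω => (T ε).indicator (fun _ => (1:ℝ≥0∞)) ω) :=
      measurable_const.indicator (hTmeas ε)
    have hsetm : MeasurableSet {c : Fin M → ℝ | ∀ j, c j = sign (ε j)} := by
      have hrw : {c : Fin M → ℝ | ∀ j, c j = sign (ε j)}
          = ⋂ j, (fun c : Fin M → ℝ => c j) ⁻¹' {sign (ε j)} := by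
        ext c; simp [Set.mem_iInter]
      rw [hrw]
      exact MeasurableSet.iInter fun j => (measurable_pi_apply j) (measurableSet_singleton _)
    have hiuv : IndepFun
        ((fun c : Fin M → ℝ =>
          ({c : Fin M → ℝ | ∀ j, c j = sign (ε j)}).indicator (fun _ => (1:ℝ≥0∞)) c) ∘
          (fun ω (j : Fin M) => r j ω))
        ((fun y : Fin M → E => (‖∑ j, sign (ε j) • y j‖₊ : ℝ≥0∞) ^ q) ∘
          (fun ω (j : Fin M) => η j ω)) P :=
      (indep_r_eta hηm hrm hindep).comp
        (measurable_const.indicator hsetm)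
        (ENNReal.continuous_rpow_const.measurable.comp
          ((Finset.measurable_sum _ fun j _ => (measurable_pi_apply j).const_smul _).enorm))
    have e1 : ((fun c : Fin M → ℝ =>
        ({c : Fin M → ℝ | ∀ j, c j = sign (ε j)}).indicator (fun _ => (1:ℝ≥0∞)) c) ∘
        (fun ω (j : Fin M) => r j ω))
        = fun ω => (T ε).indicator (fun _ => (1:ℝ≥0∞)) ω := by
      funext ω
      have hm : ((fun j => r j ω) ∈ {c : Fin M → ℝ | ∀ j, c j = sign (ε j)}) ↔ ω ∈ T ε := by
        rw [hT]
        exact Iff.rfl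
      by_cases h : ω ∈ T ε
      · simp only [Function.comp_apply]
        rw [Set.indicator_of_mem (hm.2 h), Set.indicator_of_mem h]
      · simp only [Function.comp_apply]
        rw [Set.indicator_of_notMem (fun hc => h (hm.1 hc)), Set.indicator_of_notMem h]
    have e2 : ((fun y : Fin M → E => (‖∑ j, sign (ε j) • y j‖₊ : ℝ≥0∞) ^ q) ∘
        (fun ω (j : Fin M) => η j ω)) = fun ω => (‖S ε ω‖₊ : ℝ≥0∞) ^ q := by
      funext ω
      simp only [hS, Function.comp_apply]
    rw [e1, e2] at hiuv
    have e3 : ∀ ω, (T ε).indicator (fun ω' => (‖S ε ω'‖₊ : ℝ≥0∞) ^ q) ω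
        = ((T ε).indicator (fun _ => (1:ℝ≥0∞)) ω) * ((‖S ε ω‖₊ : ℝ≥0∞) ^ q) := by
      intro ω
      by_cases h : ω ∈ T ε
      · rw [Set.indicator_of_mem h, Set.indicator_of_mem h, one_mul]
      · rw [Set.indicator_of_notMem h, Set.indicator_of_notMem h, zero_mul]
    calc ∫⁻ ω, (T ε).indicator (fun ω' => (‖S ε ω'‖₊ : ℝ≥0∞) ^ q) ω ∂P
        = ∫⁻ ω, ((T ε).indicator (fun _ => (1:ℝ≥0∞)) ω) * ((‖S ε ω‖₊ : ℝ≥0∞) ^ q) ∂P :=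
          lintegral_congr e3
      _ = (∫⁻ ω, (T ε).indicator (fun _ => (1:ℝ≥0∞)) ω ∂P)
            * ∫⁻ ω, (‖S ε ω‖₊ : ℝ≥0∞) ^ q ∂P := by
          have := lintegral_mul_eq_lintegral_mul_lintegral_of_indepFun hu hv hiuv
          simpa [Pi.mul_apply] using this
      _ = P (T ε) * J (S ε) := by
          rw [lintegral_indicator_const (hTmeas ε), one_mul, hJdef]
  have hJr : J (fun ω => ∑ j, r j ω • η j ω) = ∑ ε : Fin M → Bool, P (T ε) * J (S ε) := by
    rw [hJdef]
    calc ∫⁻ ω, (‖∑ j, r j ω • η j ω‖₊ : ℝ≥0∞) ^ q ∂P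
        = ∫⁻ ω, ∑ ε : Fin M → Bool,
            (T ε).indicator (fun ω' => (‖S ε ω'‖₊ : ℝ≥0∞) ^ q) ω ∂P :=
          lintegral_congr_ae hFsum
      _ = ∑ ε : Fin M → Bool, ∫⁻ ω,
            (T ε).indicator (fun ω' => (‖S ε ω'‖₊ : ℝ≥0∞) ^ q) ω ∂P :=
          lintegral_finset_sum _ fun ε _ =>
            (ENNReal.continuous_rpow_const.measurable.comp (hSm ε).enorm).indicator (hTmeas ε)
      _ = ∑ ε : Fin M → Bool, P (T ε) * J (S ε) := Finset.sum_congr rfl fun ε _ => hεint ε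
  have hdisjT : Pairwise (Function.onFun Disjoint T) := by
    intro ε ε' hne
    rw [Function.onFun, Set.disjoint_left]
    intro ω h1 h2
    exact hne (huniq ω ε ε' h1 h2)
  have hUc : MeasurableSet (⋃ ε, T ε) := MeasurableSet.iUnion fun ε => hTmeas ε
  have hUfull : P (⋃ ε, T ε) = 1 := by
    have hsub : ∀ᵐ ω ∂P, ω ∈ ⋃ ε, T ε := by
      filter_upwards [hae] with ω hω
      exact Set.mem_iUnion.2 ⟨_, hmemT ω hω⟩
    have h0 : P (⋃ ε, T ε)ᶜ = 0 := by
      rw [ae_iff] at hsub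
      exact hsub
    rw [measure_compl hUc (measure_ne_top _ _), measure_univ] at h0
    exact le_antisymm prob_le_one (tsub_eq_zero_iff_le.mp h0)
  have hsumT : ∑ ε : Fin M → Bool, P (T ε) = 1 := by
    rw [← tsum_fintype (L := SummationFilter.unconditional _), ← measure_iUnion hdisjT (fun ε => hTmeas ε)]
    exact hUfull
  -- Final combination
  set D := eLpNorm (fun ω => ∑ j, η j ω) p P with hD
  have hlow : ∀ ε, (D / 2) ^ q ≤ J (S ε) := by
    intro ε
    have h1 : D / 2 ≤ (J (S ε)) ^ (1/q) := by
      rw [ENNReal.div_le_iff_le_mul (Or.inl two_ne_zero) (Or.inl ENNReal.ofNat_ne_top)]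
      calc D ≤ 2 * (J (S ε)) ^ (1/q) := key ε
        _ = (J (S ε)) ^ (1/q) * 2 := mul_comm _ _
    calc (D/2) ^ q ≤ ((J (S ε)) ^ (1/q)) ^ q := ENNReal.rpow_le_rpow h1 hq0.le
      _ = J (S ε) := by
        rw [← ENNReal.rpow_mul, one_div_mul_cancel hq0.ne', ENNReal.rpow_one]
  have hge : (D/2) ^ q ≤ J (fun ω => ∑ j, r j ω • η j ω) := by
    rw [hJr]
    calc (D/2) ^ q = (∑ ε : Fin M → Bool, P (T ε)) * (D/2) ^ q := by rw [hsumT, one_mul]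
      _ = ∑ ε : Fin M → Bool, P (T ε) * (D/2) ^ q := Finset.sum_mul _ _ _
      _ ≤ ∑ ε : Fin M → Bool, P (T ε) * J (S ε) :=
          Finset.sum_le_sum fun ε _ => mul_le_mul_right (hlow ε) _
  have h2 : D / 2 ≤ eLpNorm (fun ω => ∑ j, r j ω • η j ω) p P := by
    rw [hJ_eq (fun ω => ∑ j, r j ω • η j ω)]
    calc D/2 = ((D/2) ^ q) ^ (1/q) := by
          rw [← ENNReal.rpow_mul, mul_one_div_cancel hq0.ne', ENNReal.rpow_one]
      _ ≤ (J (fun ω => ∑ j, r j ω • η j ω)) ^ (1/q) :=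
          ENNReal.rpow_le_rpow hge (by positivity)
  rw [ENNReal.div_le_iff_le_mul (Or.inl two_ne_zero) (Or.inl ENNReal.ofNat_ne_top)] at h2
  rw [mul_comm] at h2
  exact h2

end Aux

/-- Symmetrization lemma: for centered `E`-valued random variables `η₁, …, η_M` in `L^q`
and a Rademacher family `r₁, …, r_M` such that all of `η₁, …, η_M, r₁, …, r_M` are
independent, `‖∑ ηⱼ‖_{L^q(Ω;E)} ≤ 2 ‖∑ rⱼ ηⱼ‖_{L^q(Ω;E)}`. -/
theorem symmetrization
    {Ω : Type*} [MeasurableSpace Ω] (P : Measure Ω) [IsProbabilityMeasure P]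
    {E : Type*} [NormedAddCommGroup E] [NormedSpace ℝ E] [CompleteSpace E]
    [MeasurableSpace E] [BorelSpace E]
    (q : ℝ) (hq : 1 ≤ q) (M : ℕ)
    (η : Fin M → Ω → E) (r : Fin M → Ω → ℝ)
    (hmem : ∀ j, MemLp (η j) (ENNReal.ofReal q) P)
    (hmean : ∀ j, ∫ ω, η j ω ∂P = 0)
    (hrad : IsRademacherFamily P r)
    (hindep : iIndepFun (m := pairMS M) (pairFun M η r) P) :
    eLpNorm (fun ω => ∑ j, η j ω) (ENNReal.ofReal q) P
      ≤ 2 * eLpNorm (fun ω => ∑ j, r j ω • η j ω) (ENNReal.ofReal q) P := by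
  classical
  have hq0 : (0:ℝ) < q := lt_of_lt_of_le one_pos hq
  have hp1 : 1 ≤ ENNReal.ofReal q := by
    rw [← ENNReal.ofReal_one]; exact ENNReal.ofReal_le_ofReal hq
  -- measurable modification
  set η₁ : Fin M → Ω → E := fun j => (hmem j).1.mk (η j) with hη₁
  have hsm1 : ∀ j, StronglyMeasurable (η₁ j) := fun j => (hmem j).1.stronglyMeasurable_mk
  have hae1 : ∀ j, η j =ᵐ[P] η₁ j := fun j => (hmem j).1.ae_eq_mk
  have hm1 : ∀ j, Measurable (η₁ j) := fun j => (hsm1 j).measurable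
  -- separable closed subspace containing all ranges
  set sE : Set E := ⋃ j, Set.range (η₁ j) with hsE
  have hsep : TopologicalSpace.IsSeparable sE :=
    TopologicalSpace.IsSeparable.iUnion fun j => (hsm1 j).isSeparable_range
  set F : Submodule ℝ E := (Submodule.span ℝ sE).topologicalClosure with hF
  have hFclosed : IsClosed (F : Set E) := Submodule.isClosed_topologicalClosure _
  haveI : CompleteSpace F := hFclosed.completeSpace_coe
  have hFsep : TopologicalSpace.IsSeparable (F : Set E) := by
    rw [hF, Submodule.topologicalClosure_coe]
    exact hsep.span.closure
  haveI : TopologicalSpace.SeparableSpace F := hFsep.separableSpace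
  haveI : SecondCountableTopology F := UniformSpace.secondCountable_of_separable _
  haveI : BorelSpace F := Subtype.borelSpace (F : Set E)
  have hmemF : ∀ j ω, η₁ j ω ∈ F := fun j ω =>
    Submodule.le_topologicalClosure _
      (Submodule.subset_span (Set.mem_iUnion.2 ⟨j, Set.mem_range_self ω⟩))
  set η₂ : Fin M → Ω → F := fun j ω => ⟨η₁ j ω, hmemF j ω⟩ with hη₂
  have hm2 : ∀ j, Measurable (η₂ j) := fun j => (hm1 j).subtype_mk
  have help2 : ∀ j, eLpNorm (η₂ j) (ENNReal.ofReal q) P = eLpNorm (η j) (ENNReal.ofReal q) P := by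
    intro j
    refine Eq.trans (eLpNorm_congr_norm_ae ?_) (eLpNorm_congr_ae (hae1 j).symm)
    filter_upwards with ω using rfl
  have hmem2 : ∀ j, MemLp (η₂ j) (ENNReal.ofReal q) P := by
    intro j
    refine ⟨(hm2 j).stronglyMeasurable.aestronglyMeasurable, ?_⟩
    rw [help2 j]
    exact (hmem j).2
  have hint2 : ∀ j, Integrable (η₂ j) P := fun j => (hmem2 j).integrable hp1
  have hmean2 : ∀ j, ∫ ω, η₂ j ω ∂P = 0 := by
    intro j
    have h0 : ∫ ω, η₁ j ω ∂P = 0 := by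
      rw [integral_congr_ae (hae1 j).symm, hmean j]
    have hcomm : ∫ ω, F.subtypeL (η₂ j ω) ∂P = F.subtypeL (∫ ω, η₂ j ω ∂P) :=
      ContinuousLinearMap.integral_comp_comm _ (hint2 j)
    have hval : (↑(∫ ω, η₂ j ω ∂P) : E) = 0 := by
      rw [show ((↑(∫ ω, η₂ j ω ∂P)) : E) = F.subtypeL (∫ ω, η₂ j ω ∂P) from rfl, ← hcomm]
      rw [show (fun ω => F.subtypeL (η₂ j ω)) = fun ω => η₁ j ω from rfl]
      exact h0
    exact Subtype.ext hval
  -- independence transfer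
  have hindep1 : iIndepFun (m := pairMS M) (pairFun M η₁ r) P := by
    refine iIndepFun_congr_ae hindep ?_
    rintro (j | j)
    · exact hae1 j
    · exact Filter.EventuallyEq.rfl
  have hindep2 : iIndepFun (m := pairMS (E := F) M) (pairFun M η₂ r) P := by
    rw [iIndepFun_iff_measure_inter_preimage_eq_mul] at hindep1 ⊢
    intro S sets H
    have Hex : ∀ j : Fin M, Sum.inl j ∈ S →
        ∃ t : Set E, MeasurableSet t ∧ (Subtype.val : F → E) ⁻¹' t = sets (Sum.inl j) := by
      intro j hj
      exact MeasurableSpace.measurableSet_comap.mp (H _ hj)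
    set sets' : ∀ i : Fin M ⊕ Fin M, Set (pairType E M i) := fun i =>
      match i with
      | .inl j => if h : Sum.inl j ∈ S then (Hex j h).choose else Set.univ
      | .inr j => sets (.inr j)
      with hsets'
    have hset_eq : ∀ j (hj : Sum.inl j ∈ S), sets' (Sum.inl j) = (Hex j hj).choose := by
      intro j hj
      simp only [hsets']
      exact dif_pos hj
    have hpre : ∀ i ∈ S, (pairFun M η₂ r i) ⁻¹' (sets i) = (pairFun M η₁ r i) ⁻¹' (sets' i) := by
      rintro (j | j) hi
      · rw [hset_eq j hi]
        calc (pairFun M η₂ r (Sum.inl j)) ⁻¹' (sets (Sum.inl j))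
            = η₂ j ⁻¹' (Subtype.val ⁻¹' (Hex j hi).choose) := by
              rw [(Hex j hi).choose_spec.2]
              rfl
          _ = η₁ j ⁻¹' (Hex j hi).choose := rfl
      · rfl
    have hmeas' : ∀ i ∈ S, MeasurableSet[pairMS M i] (sets' i) := by
      rintro (j | j) hi
      · rw [hset_eq j hi]
        exact (Hex j hi).choose_spec.1
      · exact H _ hi
    calc P (⋂ i ∈ S, pairFun M η₂ r i ⁻¹' sets i)
        = P (⋂ i ∈ S, pairFun M η₁ r i ⁻¹' sets' i) := by
          congr 1
          exact Set.iInter₂_congr hpre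
      _ = ∏ i ∈ S, P (pairFun M η₁ r i ⁻¹' sets' i) := hindep1 S hmeas'
      _ = ∏ i ∈ S, P (pairFun M η₂ r i ⁻¹' sets i) :=
          Finset.prod_congr rfl fun i hi => by rw [hpre i hi]
  -- apply the auxiliary theorem
  have haux := symmetrization_aux P q hq M η₂ r hm2 hmem2 hmean2 hrad hindep2
  -- transfer the conclusion
  have hsum_ae : (fun ω => ∑ j, η j ω) =ᵐ[P] fun ω => ∑ j, η₁ j ω := by
    have hall : ∀ᵐ ω ∂P, ∀ j, η j ω = η₁ j ω := ae_all_iff.2 fun j => hae1 j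
    filter_upwards [hall] with ω hω
    exact Finset.sum_congr rfl fun j _ => hω j
  have e_left : eLpNorm (fun ω => ∑ j, η j ω) (ENNReal.ofReal q) P
      = eLpNorm (fun ω => ∑ j, η₂ j ω) (ENNReal.ofReal q) P := by
    rw [eLpNorm_congr_ae hsum_ae]
    refine (eLpNorm_congr_norm_ae ?_).symm
    filter_upwards with ω
    show ‖∑ j, η₂ j ω‖ = ‖∑ j, η₁ j ω‖
    rw [show ‖∑ j, η₂ j ω‖ = ‖((∑ j, η₂ j ω : F) : E)‖ from rfl,
      show ((∑ j, η₂ j ω : F) : E) = ∑ j, ((η₂ j ω : F) : E) from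
        map_sum F.subtype _ _]
  have hsmul_ae : (fun ω => ∑ j, r j ω • η j ω) =ᵐ[P] fun ω => ∑ j, r j ω • η₁ j ω := by
    have hall : ∀ᵐ ω ∂P, ∀ j, η j ω = η₁ j ω := ae_all_iff.2 fun j => hae1 j
    filter_upwards [hall] with ω hω
    exact Finset.sum_congr rfl fun j _ => by rw [hω j]
  have e_right : eLpNorm (fun ω => ∑ j, r j ω • η j ω) (ENNReal.ofReal q) P
      = eLpNorm (fun ω => ∑ j, r j ω • η₂ j ω) (ENNReal.ofReal q) P := by
    rw [eLpNorm_congr_ae hsmul_ae]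
    refine (eLpNorm_congr_norm_ae ?_).symm
    filter_upwards with ω
    show ‖∑ j, r j ω • η₂ j ω‖ = ‖∑ j, r j ω • η₁ j ω‖
    rw [show ‖∑ j, r j ω • η₂ j ω‖ = ‖((∑ j, r j ω • η₂ j ω : F) : E)‖ from rfl,
      show ((∑ j, r j ω • η₂ j ω : F) : E) = ∑ j, ((r j ω • η₂ j ω : F) : E) from
        map_sum F.subtype _ _]
    rfl
  rw [e_left, e_right]
  exact haux
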